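/- Under Gaussian input perturbations of variance σₒ², the risk of the sparse Bayes estimators equals ∑ᵢ pᵢσ² βᵢ*ᵀΣᵢ(Σᵢ + σ²I)⁻¹βᵢ* + ∑ᵢ pᵢ(σₒ² − σ²) βᵢ*ᵀΣᵢ(Σᵢ + σ²I)⁻²Σᵢβᵢ*, where expert i uses β̂ᵢ = (Σᵢ + σ²I)⁻¹Σᵢβᵢ* and its risk contribution is pᵢ(βᵢ*ᵀΣᵢβᵢ* + β̂ᵢᵀΣᵢβ̂ᵢ − 2β̂ᵢᵀΣᵢβᵢ* + σₒ² β̂ᵢᵀβ̂ᵢ). -/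

import Mathlib

open Matrix Finset

private lemma dp_symm {n : ℕ} (M : Matrix (Fin n) (Fin n) ℝ) (hM : Mᵀ = M)
    (x y : Fin n → ℝ) : M.mulVec x ⬝ᵥ y = x ⬝ᵥ M.mulVec y := by
  rw [Matrix.dotProduct_mulVec x M y, ← hM, Matrix.vecMul_transpose, hM]

/-- Under Gaussian input perturbations of variance `σₒ²`, the risk of the sparse Bayes
estimators (expert `i` uses `β̂ᵢ = (Σᵢ + σ²I)⁻¹Σᵢβᵢ*`, with risk contribution
`pᵢ(βᵢ*ᵀΣᵢβᵢ* + β̂ᵢᵀΣᵢβ̂ᵢ − 2β̂ᵢᵀΣᵢβᵢ* + σₒ² β̂ᵢᵀβ̂ᵢ)`) equals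
`∑ᵢ pᵢσ² βᵢ*ᵀΣᵢ(Σᵢ + σ²I)⁻¹βᵢ* + ∑ᵢ pᵢ(σₒ² − σ²) βᵢ*ᵀΣᵢ(Σᵢ + σ²I)⁻²Σᵢβᵢ*`. -/
theorem sparse_robustness_risk {k : ℕ} (d : Fin k → ℕ)
    (S : (i : Fin k) → Matrix (Fin (d i)) (Fin (d i)) ℝ)
    (hS : ∀ i, (S i).PosSemidef)
    (β : (i : Fin k) → (Fin (d i) → ℝ))
    (p : Fin k → ℝ) (hp0 : ∀ i, 0 < p i) (hp1 : ∀ i, p i ≤ 1)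
    (σ2 σo2 : ℝ) (hσ : 0 < σ2) (hσo : 0 < σo2)
    (bopt : (i : Fin k) → (Fin (d i) → ℝ))
    (hbopt : ∀ i, bopt i =
        ((S i + σ2 • (1 : Matrix (Fin (d i)) (Fin (d i)) ℝ))⁻¹ * S i).mulVec (β i)) :
    ∑ i, p i * (β i ⬝ᵥ (S i).mulVec (β i)
        + bopt i ⬝ᵥ (S i).mulVec (bopt i) - 2 * (bopt i ⬝ᵥ (S i).mulVec (β i))
        + σo2 * (bopt i ⬝ᵥ bopt i))
    = (∑ i, p i * σ2 *
          (β i ⬝ᵥ (S i * (S i + σ2 • (1 : Matrix (Fin (d i)) (Fin (d i)) ℝ))⁻¹).mulVec (β i)))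
      + ∑ i, p i * (σo2 - σ2) *
          (β i ⬝ᵥ (S i * ((S i + σ2 • (1 : Matrix (Fin (d i)) (Fin (d i)) ℝ))⁻¹) ^ 2
            * S i).mulVec (β i)) := by
  rw [← Finset.sum_add_distrib]
  refine Finset.sum_congr rfl fun i _ => ?_
  set n := d i
  set A : Matrix (Fin n) (Fin n) ℝ := S i + σ2 • 1 with hA
  set B : Matrix (Fin n) (Fin n) ℝ := A⁻¹ with hB
  -- A is positive definite hence invertible
  have hσ1 : (σ2 • (1 : Matrix (Fin n) (Fin n) ℝ)).PosDef := by
    refine Matrix.posDef_iff_dotProduct_mulVec.mpr ⟨?_, fun x hx => ?_⟩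
    · simp [Matrix.IsHermitian, Matrix.conjTranspose, Matrix.map_smul]
    · simp only [smul_mulVec, one_mulVec, dotProduct_smul]
      have : 0 < star x ⬝ᵥ x := by
        simpa using Matrix.dotProduct_star_self_pos_iff.mpr hx
      positivity
  have hApd : A.PosDef := Matrix.PosDef.posSemidef_add (hS i) hσ1
  have hdet : IsUnit A.det := (Matrix.isUnit_iff_isUnit_det A).1 hApd.isUnit
  have hAB : A * B = 1 := Matrix.mul_nonsing_inv A hdet
  have hBA : B * A = 1 := Matrix.nonsing_inv_mul A hdet
  -- symmetry facts
  have hSsym : (S i)ᵀ = S i := (by simpa using (hS i).1 : (S i).IsSymm).eq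
  have hAsym : Aᵀ = A := by
    rw [hA, Matrix.transpose_add, Matrix.transpose_smul, Matrix.transpose_one, hSsym]
  have hBsym : Bᵀ = B := by
    rw [hB, Matrix.transpose_nonsing_inv, hAsym]
  set D : Matrix (Fin n) (Fin n) ℝ := 1 - σ2 • B with hD
  have hDsym : Dᵀ = D := by
    rw [hD, Matrix.transpose_sub, Matrix.transpose_one, Matrix.transpose_smul, hBsym]
  have hSB : S i * B = D := by
    have h : S i * B + σ2 • B = 1 := by
      have := hAB
      rwa [hA, add_mul, smul_mul_assoc, one_mul] at this
    rw [hD, eq_sub_iff_add_eq, h]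
  have hBS : B * S i = D := by
    have h : B * S i + σ2 • B = 1 := by
      have := hBA
      rwa [hA, mul_add, mul_smul_comm, mul_one] at this
    rw [hD, eq_sub_iff_add_eq, h]
  -- the optimal coefficients
  have hb : bopt i = D.mulVec (β i) := by rw [hbopt i, ← hA, ← hB, hBS]
  -- key matrix identity
  have hDS : D * S i = S i - σ2 • 1 + (σ2 * σ2) • B := by
    rw [hD, sub_mul, one_mul, smul_mul_assoc, hBS, hD]
    module
  have hDSD : D * S i * D = S i - (2 * σ2) • 1 + (3 * (σ2 * σ2)) • B
      - (σ2 * σ2 * σ2) • (B * B) := by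
    rw [hDS, hD]
    have expand : (S i - σ2 • 1 + (σ2 * σ2) • B) * (1 - σ2 • B)
        = S i - σ2 • (S i * B) - σ2 • 1 + (σ2 * σ2) • B + (σ2 * σ2) • B
          - (σ2 * σ2 * σ2) • (B * B) := by
      simp only [mul_sub, sub_mul, add_mul, smul_mul_assoc, mul_smul_comm, mul_one,
        one_mul, smul_smul]
      module
    rw [expand, hSB, hD]
    module
  have hDD : D * D = 1 - σ2 • B - σ2 • B + (σ2 * σ2) • (B * B) := by
    rw [hD]
    simp only [mul_sub, sub_mul, one_mul, mul_one, smul_mul_assoc, mul_smul_comm, smul_smul]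
    module
  have key : S i + D * S i * D - (2 : ℝ) • (D * S i) + σo2 • (D * D)
      = σ2 • D + (σo2 - σ2) • (D * D) := by
    rw [hDSD, hDS, hDD, hD]
    module
  -- rewrite the dot products
  have h2 : bopt i ⬝ᵥ (S i).mulVec (bopt i) = β i ⬝ᵥ (D * S i * D).mulVec (β i) := by
    rw [hb, dp_symm D hDsym, Matrix.mulVec_mulVec, Matrix.mulVec_mulVec, Matrix.mul_assoc]
  have h3 : bopt i ⬝ᵥ (S i).mulVec (β i) = β i ⬝ᵥ (D * S i).mulVec (β i) := by
    rw [hb, dp_symm D hDsym, Matrix.mulVec_mulVec]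
  have h4 : bopt i ⬝ᵥ bopt i = β i ⬝ᵥ (D * D).mulVec (β i) := by
    rw [hb, dp_symm D hDsym, Matrix.mulVec_mulVec]
  have hR1 : S i * B = D := hSB
  have hR2 : S i * B ^ 2 * S i = D * D := by
    rw [sq, ← Matrix.mul_assoc, hSB, Matrix.mul_assoc, hBS]
  -- scalar form of the key identity
  have hscalar := congrArg (fun N : Matrix (Fin n) (Fin n) ℝ => β i ⬝ᵥ N.mulVec (β i)) key
  simp only [Matrix.add_mulVec, Matrix.sub_mulVec, Matrix.smul_mulVec,
    dotProduct_add, dotProduct_sub, dotProduct_smul, smul_eq_mul] at hscalar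
  rw [h2, h3, h4, hR1, hR2]
  linear_combination p i * hscalar
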